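/- Let k be a field of characteristic ≠ 2 and let A be a 4-dimensional unital division k-algebra with a Kleinian pair (α, β). For (i, j) ∈ ℤ/2 × ℤ/2 set A_{ij} = E_α((−1)^i) ∩ E_β((−1)^j). Then A is the internal direct sum A = ⊕_{(i,j)} A_{ij}, each subspace A_{ij} is 1-dimensional over k, A_{00} = k·1, and A_{ij}·A_{mn} ⊆ A_{(i+m)(j+n)} for all i, j, m, n (so the decomposition is a (ℤ/2 × ℤ/2)-grading of A). -/

import Mathlib

open Module Function

variable {k : Type} [Field k]

/-- A Kleinian pair for a nonassociative `k`-algebra `(A, mul)`: a pair of distinct commuting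
automorphisms, each of order 2. -/
def IsKleinPair {A : Type} [AddCommGroup A] [Module k A]
    (mul : A →ₗ[k] A →ₗ[k] A) (α β : A ≃ₗ[k] A) : Prop :=
  (∀ x y : A, α (mul x y) = mul (α x) (α y)) ∧
  (∀ x y : A, β (mul x y) = mul (β x) (β y)) ∧
  (∀ x : A, α (α x) = x) ∧ (∀ x : A, β (β x) = x) ∧
  (∀ x : A, α (β x) = β (α x)) ∧
  α ≠ LinearEquiv.refl k A ∧ β ≠ LinearEquiv.refl k A ∧ α ≠ β

/-- The eigenspace `E_f(ε) = {x | f x = ε • x}` of a `k`-linear operator `f`. -/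
def eigSub {A : Type} [AddCommGroup A] [Module k A] (f : A →ₗ[k] A) (ε : k) :
    Submodule k A where
  carrier := {x | f x = ε • x}
  add_mem' := by
    intro a b (ha : f a = ε • a) (hb : f b = ε • b)
    show f (a + b) = ε • (a + b)
    rw [map_add, ha, hb, smul_add]
  zero_mem' := by show f 0 = ε • (0 : A); simp
  smul_mem' := by
    intro t x (hx : f x = ε • x)
    show f (t • x) = ε • (t • x)
    rw [map_smul, hx, smul_comm]

/-- The subspace `A_{ij} = E_α((−1)^i) ∩ E_β((−1)^j)` for `(i, j) ∈ ℤ/2 × ℤ/2`. -/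
def kleinGrade {A : Type} [AddCommGroup A] [Module k A] (α β : A ≃ₗ[k] A)
    (ij : ZMod 2 × ZMod 2) : Submodule k A :=
  eigSub (α.toLinearMap) ((-1 : k) ^ ij.1.val) ⊓ eigSub (β.toLinearMap) ((-1 : k) ^ ij.2.val)


section KleinAux

/-- The projection operator onto the `ij` component. -/
noncomputable def kleinProj {A : Type} [AddCommGroup A] [Module k A]
    (α β : A ≃ₗ[k] A) (ij : ZMod 2 × ZMod 2) : A →ₗ[k] A :=
  (4:k)⁻¹ • (LinearMap.id + ((-1:k)^ij.1.val) • α.toLinearMap + ((-1:k)^ij.2.val) • β.toLinearMap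
    + (((-1:k)^ij.1.val) * ((-1:k)^ij.2.val)) • (α.toLinearMap ∘ₗ β.toLinearMap))

theorem kleinProj_apply {A : Type} [AddCommGroup A] [Module k A]
    (α β : A ≃ₗ[k] A) (ij : ZMod 2 × ZMod 2) (x : A) :
    kleinProj α β ij x = (4:k)⁻¹ • (x + ((-1:k)^ij.1.val) • α x + ((-1:k)^ij.2.val) • β x
      + (((-1:k)^ij.1.val) * ((-1:k)^ij.2.val)) • α (β x)) := by
  simp [kleinProj, add_smul]

theorem mem_kleinGrade_iff {A : Type} [AddCommGroup A] [Module k A]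
    (α β : A ≃ₗ[k] A) (ij : ZMod 2 × ZMod 2) (x : A) :
    x ∈ kleinGrade α β ij ↔ α x = ((-1:k)^ij.1.val) • x ∧ β x = ((-1:k)^ij.2.val) • x :=
  Iff.rfl

theorem epow2 (n : ℕ) : ((-1:k))^(n*2) = 1 := Even.neg_one_pow ⟨n, by ring⟩
theorem epow4 (n : ℕ) : ((-1:k))^(n*4) = 1 := Even.neg_one_pow ⟨n*2, by ring⟩

theorem sign_ne (i m : ZMod 2) (h : i ≠ m) : ((-1:k))^i.val * (-1)^m.val = -1 := by
  fin_cases i <;> fin_cases m <;> simp_all [ZMod.val] <;> exact absurd rfl h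

theorem sign_add (i m : ZMod 2) : ((-1:k)) ^ (i+m).val = (-1)^i.val * (-1)^m.val := by
  rw [ZMod.val_add, ← neg_one_pow_eq_pow_mod_two, pow_add]

section
variable {A : Type} [AddCommGroup A] [Module k A] (α β : A ≃ₗ[k] A)
  (hα2 : ∀ x : A, α (α x) = x) (hβ2 : ∀ x : A, β (β x) = x)
  (hcomm : ∀ x : A, α (β x) = β (α x)) (h2 : (2:k) ≠ 0)

include h2 in
theorem four_ne : (4:k) ≠ 0 := by
  intro h; apply h2
  have h' : (2:k)*2 = 0 := by linear_combination h
  rcases mul_eq_zero.1 h' with h'' | h'' <;> exact h''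

include hα2 hβ2 hcomm in
theorem kleinProj_mem (ij : ZMod 2 × ZMod 2) (x : A) :
    kleinProj α β ij x ∈ kleinGrade α β ij := by
  rw [mem_kleinGrade_iff]
  simp only [kleinProj_apply]
  constructor
  · simp only [map_smul, map_add, hα2]
    match_scalars <;> (ring_nf; try simp only [epow2, epow4]; try ring)
  · simp only [map_smul, map_add, hβ2, ← hcomm]
    try simp only [hβ2]
    match_scalars <;> (ring_nf; try simp only [epow2, epow4]; try ring)

include h2 in
theorem kleinProj_diag (ij : ZMod 2 × ZMod 2) (x : A) (hx : x ∈ kleinGrade α β ij) :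
    kleinProj α β ij x = x := by
  rw [mem_kleinGrade_iff] at hx
  obtain ⟨h1, hb⟩ := hx
  have h4 := four_ne h2
  rw [kleinProj_apply, h1, hb, map_smul, h1]
  match_scalars
  ring_nf
  simp only [epow2, epow4]
  field_simp
  try norm_num

omit h2 in
theorem kleinProj_off (ij mn : ZMod 2 × ZMod 2) (hne : mn ≠ ij) (x : A)
    (hx : x ∈ kleinGrade α β mn) : kleinProj α β ij x = 0 := by
  rw [mem_kleinGrade_iff] at hx
  obtain ⟨h1, hb⟩ := hx
  rw [kleinProj_apply, h1, hb, map_smul, h1]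
  have : ij.1 ≠ mn.1 ∨ ij.2 ≠ mn.2 := by
    by_contra h
    push_neg at h
    exact hne (Prod.ext h.1.symm h.2.symm)
  rcases this with h | h
  · have ha := sign_ne (k := k) ij.1 mn.1 h
    match_scalars
    ring_nf
    linear_combination ((4:k)⁻¹ + (4:k)⁻¹ * ((-1:k)^ij.2.val * (-1:k)^mn.2.val)) * ha
  · have ha := sign_ne (k := k) ij.2 mn.2 h
    match_scalars
    ring_nf
    linear_combination ((4:k)⁻¹ + (4:k)⁻¹ * ((-1:k)^ij.1.val * (-1:k)^mn.1.val)) * ha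

include h2 in
theorem kleinProj_sum (x : A) :
    kleinProj α β (0,0) x + kleinProj α β (0,1) x + kleinProj α β (1,0) x
      + kleinProj α β (1,1) x = x := by
  have h4 := four_ne h2
  simp only [kleinProj_apply]
  simp only [show ((0:ZMod 2)).val = 0 from rfl, show ((1:ZMod 2)).val = 1 from rfl,
    pow_zero, pow_one, one_smul, mul_one, one_mul, neg_smul, neg_neg, mul_neg, neg_mul]
  match_scalars <;> field_simp <;> norm_num
end

end KleinAux

/-- Let `k` be a field of characteristic ≠ 2 and `A` a 4-dimensional unital
division `k`-algebra with a Kleinian pair `(α, β)`. Then `A` is the internal direct sum of the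
subspaces `A_{ij} = E_α((−1)^i) ∩ E_β((−1)^j)`, each `A_{ij}` is 1-dimensional over `k`,
`A_{00} = k·1`, and `A_{ij}·A_{mn} ⊆ A_{(i+m)(j+n)}`, i.e. the decomposition is a
`(ℤ/2 × ℤ/2)`-grading of `A`. -/
theorem klein_grading (hchar : (2 : k) ≠ 0)
    (A : Type) [AddCommGroup A] [Module k A] [FiniteDimensional k A]
    (mul : A →ₗ[k] A →ₗ[k] A) (one : A)
    (h4 : finrank k A = 4)
    (hone : ∀ x : A, mul one x = x ∧ mul x one = x)
    (hdiv : ∀ a : A, a ≠ 0 →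
      Function.Bijective (fun x => mul a x) ∧ Function.Bijective (fun x => mul x a))
    (α β : A ≃ₗ[k] A) (hkl : IsKleinPair mul α β) :
    DirectSum.IsInternal (fun ij : ZMod 2 × ZMod 2 => kleinGrade α β ij) ∧
    (∀ ij : ZMod 2 × ZMod 2, finrank k ↥(kleinGrade α β ij) = 1) ∧
    kleinGrade α β (0, 0) = Submodule.span k {one} ∧
    (∀ (ij mn : ZMod 2 × ZMod 2) (x y : A),
      x ∈ kleinGrade α β ij → y ∈ kleinGrade α β mn → mul x y ∈ kleinGrade α β (ij + mn)) := by
  obtain ⟨hα, hβ, hα2, hβ2, hcomm, hαne, hβne, hαβne⟩ := hkl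
  have h2 : (2:k) ≠ 0 := hchar
  -- multiplicativity of the grading
  have hmul : ∀ (ij mn : ZMod 2 × ZMod 2) (x y : A),
      x ∈ kleinGrade α β ij → y ∈ kleinGrade α β mn → mul x y ∈ kleinGrade α β (ij + mn) := by
    intro ij mn x y hx hy
    rw [mem_kleinGrade_iff] at hx hy ⊢
    obtain ⟨hx1, hx2⟩ := hx
    obtain ⟨hy1, hy2⟩ := hy
    constructor
    · rw [hα, hx1, hy1, map_smul, map_smul, LinearMap.smul_apply, Prod.fst_add, sign_add]
      match_scalars <;> ring
    · rw [hβ, hx2, hy2, map_smul, map_smul, LinearMap.smul_apply, Prod.snd_add, sign_add]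
      match_scalars <;> ring
  -- the identity is nonzero
  have honez : one ≠ 0 := by
    intro h
    have hz : ∀ x : A, x = 0 := by
      intro x
      have hx := (hone x).1
      rw [h] at hx
      simpa using hx.symm
    have : Subsingleton A := ⟨fun a b => by rw [hz a, hz b]⟩
    rw [finrank_zero_of_subsingleton] at h4
    exact absurd h4 (by norm_num)
  -- the identity is fixed by α and β
  have hfix : ∀ γ : A ≃ₗ[k] A, (∀ x y : A, γ (mul x y) = mul (γ x) (γ y)) → γ one = one := by
    intro γ hγ
    have h1 : mul (γ one) (γ one) = γ one := by
      rw [← hγ, (hone one).1]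
    have hu : γ one ≠ 0 := fun h => honez (by simpa using γ.map_eq_zero_iff.1 h)
    have hinj := (hdiv (γ one) hu).1.injective
    exact hinj (a₁ := γ one) (a₂ := one)
      (show mul (γ one) (γ one) = mul (γ one) one by rw [h1, (hone (γ one)).2])
  have hone00 : one ∈ kleinGrade α β ((0,0) : ZMod 2 × ZMod 2) := by
    rw [mem_kleinGrade_iff]
    constructor
    · simpa [show ((0:ZMod 2)).val = 0 from rfl] using hfix α hα
    · simpa [show ((0:ZMod 2)).val = 0 from rfl] using hfix β hβ
  -- components of the projection decomposition
  have hsgnα : ∀ (ij : ZMod 2 × ZMod 2) (x : A),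
      α (kleinProj α β ij x) = ((-1:k)^ij.1.val) • kleinProj α β ij x :=
    fun ij x => ((mem_kleinGrade_iff α β ij _).1 (kleinProj_mem α β hα2 hβ2 hcomm ij x)).1
  have hsgnβ : ∀ (ij : ZMod 2 × ZMod 2) (x : A),
      β (kleinProj α β ij x) = ((-1:k)^ij.2.val) • kleinProj α β ij x :=
    fun ij x => ((mem_kleinGrade_iff α β ij _).1 (kleinProj_mem α β hα2 hβ2 hcomm ij x)).2
  have hbotz : ∀ (ij : ZMod 2 × ZMod 2) (x : A), kleinGrade α β ij = ⊥ →
      kleinProj α β ij x = 0 := by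
    intro ij x hb
    have := kleinProj_mem α β hα2 hβ2 hcomm ij x
    rw [hb] at this
    simpa using this
  -- at least two of the three nontrivial grades are nonzero
  have key1 : kleinGrade α β ((1,0) : ZMod 2 × ZMod 2) ≠ ⊥ ∨
      kleinGrade α β ((1,1) : ZMod 2 × ZMod 2) ≠ ⊥ := by
    by_contra h
    push_neg at h
    obtain ⟨hA, hB⟩ := h
    refine hαne (LinearEquiv.ext fun x => ?_)
    show α x = x
    have hs := kleinProj_sum α β h2 x
    conv_lhs => rw [← hs]
    conv_rhs => rw [← hs]
    rw [hbotz _ x hA, hbotz _ x hB, add_zero, add_zero, map_add, hsgnα (0,0) x, hsgnα (0,1) x]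
    norm_num [show ((0:ZMod 2)).val = 0 from rfl]
  have key2 : kleinGrade α β ((0,1) : ZMod 2 × ZMod 2) ≠ ⊥ ∨
      kleinGrade α β ((1,1) : ZMod 2 × ZMod 2) ≠ ⊥ := by
    by_contra h
    push_neg at h
    obtain ⟨hA, hB⟩ := h
    refine hβne (LinearEquiv.ext fun x => ?_)
    show β x = x
    have hs := kleinProj_sum α β h2 x
    conv_lhs => rw [← hs]
    conv_rhs => rw [← hs]
    rw [hbotz _ x hA, hbotz _ x hB, add_zero]
    rw [show kleinProj α β (0,0) x + 0 + kleinProj α β (1,0) x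
      = kleinProj α β (0,0) x + kleinProj α β (1,0) x by abel]
    rw [map_add, hsgnβ (0,0) x, hsgnβ (1,0) x]
    norm_num [show ((0:ZMod 2)).val = 0 from rfl]
  have key3 : kleinGrade α β ((0,1) : ZMod 2 × ZMod 2) ≠ ⊥ ∨
      kleinGrade α β ((1,0) : ZMod 2 × ZMod 2) ≠ ⊥ := by
    by_contra h
    push_neg at h
    obtain ⟨hA, hB⟩ := h
    refine hαβne (LinearEquiv.ext fun x => ?_)
    have hs := kleinProj_sum α β h2 x
    show α x = β x
    conv_lhs => rw [← hs]
    conv_rhs => rw [← hs]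
    rw [hbotz _ x hA, hbotz _ x hB, add_zero]
    rw [show kleinProj α β (0,0) x + 0 + kleinProj α β (1,1) x
      = kleinProj α β (0,0) x + kleinProj α β (1,1) x by abel]
    rw [map_add, map_add, hsgnα (0,0) x, hsgnα (1,1) x, hsgnβ (0,0) x, hsgnβ (1,1) x]
    try norm_num [show ((0:ZMod 2)).val = 0 from rfl, show ((1:ZMod 2)).val = 1 from rfl]
  -- products of nonzero grades are nonzero
  have hprod : ∀ g h : ZMod 2 × ZMod 2, kleinGrade α β g ≠ ⊥ → kleinGrade α β h ≠ ⊥ →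
      kleinGrade α β (g + h) ≠ ⊥ := by
    intro g h hg hh
    rw [Submodule.ne_bot_iff] at hg hh ⊢
    obtain ⟨x, hx, hx0⟩ := hg
    obtain ⟨y, hy, hy0⟩ := hh
    refine ⟨mul x y, hmul _ _ _ _ hx hy, fun h0 => hy0 ?_⟩
    exact (hdiv x hx0).1.injective (a₁ := y) (a₂ := 0)
      (show mul x y = mul x 0 by rw [h0, map_zero])
  have h00ne : kleinGrade α β ((0,0) : ZMod 2 × ZMod 2) ≠ ⊥ :=
    (Submodule.ne_bot_iff _).2 ⟨one, hone00, honez⟩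
  have hall : kleinGrade α β ((1,1) : ZMod 2 × ZMod 2) ≠ ⊥ ∧
      kleinGrade α β ((1,0) : ZMod 2 × ZMod 2) ≠ ⊥ ∧
      kleinGrade α β ((0,1) : ZMod 2 × ZMod 2) ≠ ⊥ := by
    have e1 : ((1,0) + (0,1) : ZMod 2 × ZMod 2) = (1,1) := by decide
    have e2 : ((1,0) + (1,1) : ZMod 2 × ZMod 2) = (0,1) := by decide
    have e3 : ((0,1) + (1,1) : ZMod 2 × ZMod 2) = (1,0) := by decide
    rcases key1 with h10 | h11
    · rcases key2 with h01 | h11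
      · exact ⟨e1 ▸ hprod _ _ h10 h01, h10, h01⟩
      · exact ⟨h11, h10, e2 ▸ hprod _ _ h10 h11⟩
    · rcases key2 with h01 | _
      · exact ⟨h11, e3 ▸ hprod _ _ h01 h11, h01⟩
      · rcases key3 with h01 | h10
        · exact ⟨h11, e3 ▸ hprod _ _ h01 h11, h01⟩
        · exact ⟨h11, h10, e2 ▸ hprod _ _ h10 h11⟩
  have hnebot : ∀ ij : ZMod 2 × ZMod 2, kleinGrade α β ij ≠ ⊥ := by
    intro ij
    fin_cases ij
    · exact h00ne
    · exact hall.2.2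
    · exact hall.2.1
    · exact hall.1
  -- internal direct sum
  have hsup : (⨆ ij : ZMod 2 × ZMod 2, kleinGrade α β ij) = ⊤ := by
    rw [eq_top_iff]
    rintro x -
    have hs := kleinProj_sum α β h2 x
    have hm : ∀ ij : ZMod 2 × ZMod 2,
        kleinProj α β ij x ∈ ⨆ ij : ZMod 2 × ZMod 2, kleinGrade α β ij :=
      fun ij => Submodule.mem_iSup_of_mem ij (kleinProj_mem α β hα2 hβ2 hcomm ij x)
    rw [← hs]
    exact add_mem (add_mem (add_mem (hm _) (hm _)) (hm _)) (hm _)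
  have hind : iSupIndep (fun ij : ZMod 2 × ZMod 2 => kleinGrade α β ij) := by
    intro ij
    rw [Submodule.disjoint_def]
    intro x hx hx'
    have hker : (⨆ mn, ⨆ (_ : mn ≠ ij), kleinGrade α β mn)
        ≤ LinearMap.ker (kleinProj α β ij) := by
      refine iSup_le fun mn => iSup_le fun hne y hy => ?_
      exact LinearMap.mem_ker.2 (kleinProj_off α β ij mn hne y hy)
    have h0 : kleinProj α β ij x = 0 := hker hx'
    rw [← kleinProj_diag α β h2 ij x hx, h0]
  have hInternal : DirectSum.IsInternal (fun ij : ZMod 2 × ZMod 2 => kleinGrade α β ij) :=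
    DirectSum.isInternal_submodule_of_iSupIndep_of_iSup_eq_top hind hsup
  -- dimension count
  have hfr : ∑ ij : ZMod 2 × ZMod 2, finrank k (kleinGrade α β ij) = 4 := by
    have e := LinearEquiv.ofBijective
      (DirectSum.coeLinearMap (fun ij : ZMod 2 × ZMod 2 => kleinGrade α β ij)) hInternal
    have he := e.finrank_eq
    rw [h4, Module.finrank_directSum] at he
    exact he
  have hpos : ∀ ij : ZMod 2 × ZMod 2, 1 ≤ finrank k (kleinGrade α β ij) := by
    intro ij
    have : Nontrivial (kleinGrade α β ij) :=
      Submodule.nontrivial_iff_ne_bot.2 (hnebot ij)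
    exact Module.finrank_pos_iff.2 this
  have hone1 : ∀ ij : ZMod 2 × ZMod 2, finrank k (kleinGrade α β ij) = 1 := by
    intro ij
    by_contra hne
    have h2le : 2 ≤ finrank k (kleinGrade α β ij) := by
      have := hpos ij; omega
    have hlt : ∑ _ij : ZMod 2 × ZMod 2, 1
        < ∑ ij : ZMod 2 × ZMod 2, finrank k (kleinGrade α β ij) :=
      Finset.sum_lt_sum (fun i _ => hpos i) ⟨ij, Finset.mem_univ _, by omega⟩
    rw [hfr] at hlt
    simp [Finset.card_univ] at hlt
  have hspan : kleinGrade α β ((0,0) : ZMod 2 × ZMod 2) = Submodule.span k {one} := by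
    refine (Submodule.eq_of_le_of_finrank_le
      (Submodule.span_le.2 (Set.singleton_subset_iff.2 hone00)) ?_).symm
    rw [hone1 (0,0), finrank_span_singleton honez]
  exact ⟨hInternal, hone1, hspan, hmul⟩
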